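/- Let a > 0 and b ∈ ℝ. (i) If T > 0 and ρ : [0,T] → (0,∞) is differentiable with ρ'(t) = a·log ρ(t) + b for all t ∈ [0,T] and a·log ρ(0) + b < 0, then T < ρ(0)/(−(a·log ρ(0) + b)); in particular such a positive solution cannot exist for all time, i.e. the solution reaches zero in finite time. (ii) If ρ : [0,∞) → (0,∞) is differentiable with ρ'(t) = a·log ρ(t) + b for all t ≥ 0 and a·log ρ(0) + b > 0, then ρ is strictly increasing and ρ(t) → ∞ as t → ∞. -/

import Mathlib

open Set Filter

/-- dichotomy for round spheres under the logarithmic curvature flow.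
(i) A positive solution of `ρ' = a log ρ + b` on `[0,T]` with `a log ρ(0) + b < 0`
forces `T < ρ(0)/(−(a log ρ(0) + b))`, so such a solution reaches zero in finite time.
(ii) A positive solution on `[0,∞)` with `a log ρ(0) + b > 0` is strictly increasing
and tends to infinity. -/
theorem stmt_8 (a b : ℝ) (ha : 0 < a) :
    (∀ T : ℝ, 0 < T → ∀ ρ : ℝ → ℝ,
      (∀ t ∈ Icc (0 : ℝ) T, 0 < ρ t) →
      (∀ t ∈ Icc (0 : ℝ) T,
        HasDerivWithinAt ρ (a * Real.log (ρ t) + b) (Icc 0 T) t) →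
      a * Real.log (ρ 0) + b < 0 →
      T < ρ 0 / (-(a * Real.log (ρ 0) + b))) ∧
    (∀ ρ : ℝ → ℝ,
      (∀ t : ℝ, 0 ≤ t → 0 < ρ t) →
      (∀ t : ℝ, 0 ≤ t →
        HasDerivWithinAt ρ (a * Real.log (ρ t) + b) (Set.Ici 0) t) →
      0 < a * Real.log (ρ 0) + b →
      StrictMonoOn ρ (Set.Ici 0) ∧ Tendsto ρ atTop atTop) := by
  constructor
  · -- Part (i)
    intro T hT ρ hpos hderiv hc
    set φ : ℝ → ℝ := fun t => a * Real.log (ρ t) + b with hφ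
    set c : ℝ := a * Real.log (ρ 0) + b with hcdef
    have hcont : ContinuousOn ρ (Icc 0 T) := fun t ht => (hderiv t ht).continuousWithinAt
    have hφcont : ContinuousOn φ (Icc 0 T) := by
      apply ContinuousOn.add _ continuousOn_const
      exact continuousOn_const.mul
        (Real.continuousOn_log.comp hcont fun t ht => (hpos t ht).ne')
    -- at interior points we get a true derivative
    have hderivAt : ∀ x ∈ Ioo (0:ℝ) T, HasDerivAt ρ (φ x) x := by
      intro x hx
      exact (hderiv x (Ioo_subset_Icc_self hx)).hasDerivAt (Icc_mem_nhds hx.1 hx.2)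
    -- Claim: φ t < 0 on [0,T]
    have key : ∀ t ∈ Icc (0:ℝ) T, φ t < 0 := by
      by_contra h
      push_neg at h
      obtain ⟨t₁, ht₁, ht₁'⟩ := h
      set E : Set ℝ := {t | t ∈ Icc (0:ℝ) T ∧ 0 ≤ φ t} with hE
      have hEclosed : IsClosed E := by
        have : E = Icc 0 T ∩ (Icc 0 T ∩ φ ⁻¹' Ici 0) := by
          ext t; simp [hE]
        rw [this]
        exact isClosed_Icc.inter (hφcont.preimage_isClosed_of_isClosed isClosed_Icc isClosed_Ici)
      have hEne : E.Nonempty := ⟨t₁, ht₁, ht₁'⟩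
      have hEbdd : BddBelow E := ⟨0, fun t ht => ht.1.1⟩
      set t₀ := sInf E with ht₀def
      have ht₀E : t₀ ∈ E := hEclosed.csInf_mem hEne hEbdd
      have ht₀pos : 0 < t₀ := by
        rcases (lt_or_eq_of_le ht₀E.1.1) with h | h
        · exact h
        · exfalso; rw [← h] at ht₀E
          exact absurd ht₀E.2 (not_le.mpr hc)
      -- φ < 0 on [0, t₀)
      have hneg : ∀ s ∈ Ico (0:ℝ) t₀, φ s < 0 := by
        intro s hs
        by_contra h'
        push_neg at h'
        have : s ∈ E := ⟨⟨hs.1, hs.2.le.trans ht₀E.1.2⟩, h'⟩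
        exact absurd (csInf_le hEbdd this) (not_le.mpr hs.2)
      -- ρ strictly decreasing on [0, t₀]
      have hsub : Icc (0:ℝ) t₀ ⊆ Icc 0 T := Icc_subset_Icc le_rfl ht₀E.1.2
      have hanti : StrictAntiOn ρ (Icc 0 t₀) := by
        apply strictAntiOn_of_deriv_neg (convex_Icc 0 t₀) (hcont.mono hsub)
        intro x hx
        rw [interior_Icc] at hx
        have hx' : x ∈ Ioo (0:ℝ) T := ⟨hx.1, lt_of_lt_of_le hx.2 ht₀E.1.2⟩
        rw [(hderivAt x hx').deriv]
        exact hneg x ⟨hx.1.le, hx.2⟩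
      have hρlt : ρ t₀ < ρ 0 :=
        hanti (left_mem_Icc.mpr ht₀pos.le) (right_mem_Icc.mpr ht₀pos.le) ht₀pos
      have : φ t₀ < c := by
        have := Real.log_lt_log (hpos t₀ ht₀E.1) hρlt
        simp only [hφ, hcdef]
        nlinarith
      linarith [ht₀E.2]
    -- hence ρ is antitone on [0,T] and φ t ≤ c
    have hanti : StrictAntiOn ρ (Icc 0 T) := by
      apply strictAntiOn_of_deriv_neg (convex_Icc 0 T) hcont
      intro x hx
      rw [interior_Icc] at hx
      rw [(hderivAt x hx).deriv]
      exact key x (Ioo_subset_Icc_self hx)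
    have hφle : ∀ t ∈ Icc (0:ℝ) T, φ t ≤ c := by
      intro t ht
      rcases eq_or_lt_of_le ht.1 with h | h
      · rw [← h]
      · have hρ : ρ t < ρ 0 := hanti (left_mem_Icc.mpr hT.le) ht h
        have := Real.log_lt_log (hpos t ht) hρ
        simp only [hφ, hcdef]
        nlinarith
    -- compare with linear function: g t = ρ t - c * t is antitone
    have hg : AntitoneOn (fun t => ρ t - c * t) (Icc 0 T) := by
      apply antitoneOn_of_deriv_nonpos (convex_Icc 0 T)
      · exact hcont.sub ((continuousOn_const.mul continuousOn_id))
      · intro x hx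
        rw [interior_Icc] at hx
        exact ((hderivAt x hx).sub ((hasDerivAt_id x).const_mul c)).differentiableAt.differentiableWithinAt
      · intro x hx
        rw [interior_Icc] at hx
        have hd : HasDerivAt (fun t => ρ t - c * t) (φ x - c * 1) x :=
          (hderivAt x hx).sub ((hasDerivAt_id x).const_mul c)
        rw [hd.deriv]
        have := hφle x (Ioo_subset_Icc_self hx)
        linarith
    have hgT : ρ T - c * T ≤ ρ 0 - c * 0 :=
      hg (left_mem_Icc.mpr hT.le) (right_mem_Icc.mpr hT.le) hT.le
    have hρT : 0 < ρ T := hpos T (right_mem_Icc.mpr hT.le)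
    have hcneg : c < 0 := hc
    rw [lt_div_iff₀ (by linarith : (0:ℝ) < -c)]
    nlinarith
  · -- Part (ii)
    intro ρ hpos hderiv hc
    set φ : ℝ → ℝ := fun t => a * Real.log (ρ t) + b with hφ
    set c : ℝ := a * Real.log (ρ 0) + b with hcdef
    have hcont : ContinuousOn ρ (Ici 0) := fun t ht => (hderiv t ht).continuousWithinAt
    have hφcont : ContinuousOn φ (Ici 0) := by
      apply ContinuousOn.add _ continuousOn_const
      exact continuousOn_const.mul
        (Real.continuousOn_log.comp hcont fun t ht => (hpos t ht).ne')
    have hderivAt : ∀ x ∈ Ioi (0:ℝ), HasDerivAt ρ (φ x) x := by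
      intro x hx
      exact (hderiv x (le_of_lt hx)).hasDerivAt (Ici_mem_nhds hx)
    -- Claim: φ t > 0 on [0, ∞)
    have key : ∀ t : ℝ, 0 ≤ t → 0 < φ t := by
      by_contra h
      push_neg at h
      obtain ⟨t₁, ht₁, ht₁'⟩ := h
      set E : Set ℝ := {t | t ∈ Ici (0:ℝ) ∧ φ t ≤ 0} with hE
      have hEclosed : IsClosed E := by
        have : E = Ici 0 ∩ (Ici 0 ∩ φ ⁻¹' Iic 0) := by
          ext t; simp [hE]
        rw [this]
        exact isClosed_Ici.inter (hφcont.preimage_isClosed_of_isClosed isClosed_Ici isClosed_Iic)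
      have hEne : E.Nonempty := ⟨t₁, ht₁, ht₁'⟩
      have hEbdd : BddBelow E := ⟨0, fun t ht => ht.1⟩
      set t₀ := sInf E with ht₀def
      have ht₀E : t₀ ∈ E := hEclosed.csInf_mem hEne hEbdd
      have ht₀pos : 0 < t₀ := by
        rcases (lt_or_eq_of_le (Set.mem_Ici.mp ht₀E.1)) with h | h
        · exact h
        · exfalso; rw [← h] at ht₀E
          exact absurd ht₀E.2 (not_le.mpr hc)
      have hposφ : ∀ s ∈ Ico (0:ℝ) t₀, 0 < φ s := by
        intro s hs
        by_contra h'
        push_neg at h'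
        have : s ∈ E := ⟨hs.1, h'⟩
        exact absurd (csInf_le hEbdd this) (not_le.mpr hs.2)
      have hmono : StrictMonoOn ρ (Icc 0 t₀) := by
        apply strictMonoOn_of_deriv_pos (convex_Icc 0 t₀)
          (hcont.mono (Icc_subset_Ici_self))
        intro x hx
        rw [interior_Icc] at hx
        rw [(hderivAt x hx.1).deriv]
        exact hposφ x ⟨hx.1.le, hx.2⟩
      have hρgt : ρ 0 < ρ t₀ :=
        hmono (left_mem_Icc.mpr ht₀pos.le) (right_mem_Icc.mpr ht₀pos.le) ht₀pos
      have : c < φ t₀ := by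
        have := Real.log_lt_log (hpos 0 le_rfl) hρgt
        simp only [hφ, hcdef]
        nlinarith
      linarith [ht₀E.2, hc]
    have hmono : StrictMonoOn ρ (Ici 0) := by
      apply strictMonoOn_of_deriv_pos (convex_Ici 0) hcont
      intro x hx
      rw [interior_Ici] at hx
      rw [(hderivAt x hx).deriv]
      exact key x (le_of_lt hx)
    refine ⟨hmono, ?_⟩
    -- φ t ≥ c for t ≥ 0
    have hφge : ∀ t : ℝ, 0 ≤ t → c ≤ φ t := by
      intro t ht
      rcases eq_or_lt_of_le ht with h | h
      · rw [← h]
      · have hρ : ρ 0 < ρ t := hmono self_mem_Ici ht h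
        have := Real.log_lt_log (hpos 0 le_rfl) hρ
        simp only [hφ, hcdef]
        nlinarith
    have hg : MonotoneOn (fun t => ρ t - c * t) (Ici 0) := by
      apply monotoneOn_of_deriv_nonneg (convex_Ici 0)
      · exact hcont.sub ((continuousOn_const.mul continuousOn_id))
      · intro x hx
        rw [interior_Ici] at hx
        exact ((hderivAt x hx).sub ((hasDerivAt_id x).const_mul c)).differentiableAt.differentiableWithinAt
      · intro x hx
        rw [interior_Ici] at hx
        have hd : HasDerivAt (fun t => ρ t - c * t) (φ x - c * 1) x :=
          (hderivAt x hx).sub ((hasDerivAt_id x).const_mul c)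
        rw [hd.deriv]
        have := hφge x (le_of_lt hx)
        linarith
    have hlin : ∀ t : ℝ, 0 ≤ t → ρ 0 + c * t ≤ ρ t := by
      intro t ht
      have := hg self_mem_Ici ht ht
      simp only at this
      linarith
    apply tendsto_atTop_mono' atTop
      (Filter.eventually_atTop.mpr ⟨0, fun t ht => hlin t ht⟩)
    exact tendsto_atTop_add_const_left atTop (ρ 0)
      (tendsto_id.const_mul_atTop hc)
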